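/- arXiv:2102.09750 — 4 statements merged into one kernel-verified Lean document; each statement's English description precedes it below -/
import Mathlib

section
/- Let x(t) solve dx/dt = f(x,t) with initial condition x(0) = x₀, where f is C¹ and the solution depends differentiably on the initial condition. Let λ(t) solve the adjoint equation dλ/dt = -(∂f/∂x)(x(t),t)ᵀ λ(t) with final condition λ(T) = (∂L/∂x(T))ᵀ for a differentiable function L : ℝⁿ → ℝ. Then for every t ∈ [0,T], λ(t) = (∂(L∘Φ_{t→T})/∂x(t))ᵀ, i.e., λ(t) equals the gradient of L(x(T)) with respect to the state x(t). -/
open scoped Matrix BigOperators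

open Set

set_option maxHeartbeats 1000000

section ODEAux

variable {E : Type*} [NormedAddCommGroup E] [NormedSpace ℝ E] [CompleteSpace E]

omit [CompleteSpace E] in
lemma ode_glue (v : ℝ → E → E) (a m b : ℝ) (ham : a ≤ m) (hmb : m ≤ b)
    (δ₁ δ₂ : ℝ → E) (hm : δ₁ m = δ₂ m)
    (h₁ : ∀ t ∈ Icc a m, HasDerivWithinAt δ₁ (v t (δ₁ t)) (Icc a m) t)
    (h₂ : ∀ t ∈ Icc m b, HasDerivWithinAt δ₂ (v t (δ₂ t)) (Icc m b) t) :
    ∃ δ : ℝ → E, (∀ t ∈ Icc a m, δ t = δ₁ t) ∧ (∀ t ∈ Icc m b, δ t = δ₂ t) ∧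
      ∀ t ∈ Icc a b, HasDerivWithinAt δ (v t (δ t)) (Icc a b) t := by
  classical
  refine ⟨fun t => if t ≤ m then δ₁ t else δ₂ t, ?_, ?_, ?_⟩
  · intro t ht; simp [ht.2]
  · intro t ht
    by_cases h : t ≤ m
    · have : t = m := le_antisymm h ht.1
      simp [this, hm]
    · simp [h]
  · intro t ht
    rw [← Icc_union_Icc_eq_Icc ham hmb]
    set δ : ℝ → E := fun t => if t ≤ m then δ₁ t else δ₂ t with hδ
    have e1 : ∀ y ∈ Icc a m, δ y = δ₁ y := fun y hy => by simp [hδ, hy.2]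
    have e2 : ∀ y ∈ Icc m b, δ y = δ₂ y := by
      intro y hy
      by_cases h : y ≤ m
      · have : y = m := le_antisymm h hy.1
        simp [hδ, this, hm]
      · simp [hδ, h]
    apply HasDerivWithinAt.union
    · by_cases h : t ∈ Icc a m
      · rw [e1 t h]
        exact (h₁ t h).congr (fun y hy => e1 y hy) (e1 t h)
      · exact HasFDerivWithinAt.of_notMem_closure (by rwa [isClosed_Icc.closure_eq])
    · by_cases h : t ∈ Icc m b
      · rw [e2 t h]
        exact (h₂ t h).congr (fun y hy => e2 y hy) (e2 t h)
      · exact HasFDerivWithinAt.of_notMem_closure (by rwa [isClosed_Icc.closure_eq])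

lemma ode_forward (K : ℝ → (E →L[ℝ] E)) (hK : Continuous K) (s b : ℝ) (hsb : s ≤ b) (v₀ : E) :
    ∃ δ : ℝ → E, δ s = v₀ ∧ ∀ t ∈ Icc s b, HasDerivWithinAt δ (K t (δ t)) (Icc s b) t := by
  obtain ⟨M₀, hM₀⟩ := isCompact_Icc.exists_bound_of_continuousOn (s := Icc s b) hK.continuousOn
  set M : ℝ := max M₀ 0 with hMdef
  have hM : 0 ≤ M := le_max_right _ _
  have hMb : ∀ t ∈ Icc s b, ‖K t‖ ≤ M := fun t ht => (hM₀ t ht).trans (le_max_left _ _)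
  set ε : ℝ := 1 / (2 * M + 2) with hεdef
  have hε : 0 < ε := by positivity
  -- one Picard–Lindelöf step
  have onestep : ∀ s' ∈ Icc s b, ∀ v : E, ∃ δ : ℝ → E, δ s' = v ∧
      ∀ t ∈ Icc s' (min b (s' + ε)),
        HasDerivWithinAt δ (K t (δ t)) (Icc s' (min b (s' + ε))) t := by
    intro s' hs' v
    have hle : s' ≤ min b (s' + ε) := le_min hs'.2 (by linarith)
    have hpl : IsPicardLindelof (fun t x => K t x) (tmin := s') (tmax := min b (s' + ε))
        ⟨s', le_rfl, hle⟩ v (‖v‖₊ + 1) 0 (2 * M * (‖v‖ + 1)).toNNReal M.toNNReal := by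
      constructor
      · intro t ht
        refine ((K t).lipschitz.weaken ?_).lipschitzOnWith
        have h1 : t ∈ Icc s b := ⟨hs'.1.trans ht.1, ht.2.trans (min_le_left _ _)⟩
        have := hMb t h1
        rw [← NNReal.coe_le_coe, coe_nnnorm, Real.coe_toNNReal _ hM]
        exact this
      · intro x _
        exact ((ContinuousLinearMap.apply ℝ E x).continuous.comp hK).continuousOn
      · intro t ht x hx
        rw [Real.coe_toNNReal _ (by positivity)]
        have h1 : t ∈ Icc s b := ⟨hs'.1.trans ht.1, ht.2.trans (min_le_left _ _)⟩
        have h2 : ‖K t x‖ ≤ M * ‖x‖ :=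
          le_trans ((K t).le_opNorm x) (by
            have := hMb t h1
            exact mul_le_mul_of_nonneg_right this (norm_nonneg _))
        have h3 : ‖x‖ ≤ ‖v‖ + (‖v‖ + 1) := by
          have := mem_closedBall_iff_norm.mp hx
          push_cast at this
          have h4 : ‖x‖ - ‖v‖ ≤ ‖x - v‖ := norm_sub_norm_le _ _
          linarith
        nlinarith [norm_nonneg v, norm_nonneg x]
      · have h5 : max (min b (s' + ε) - s') (s' - s') ≤ ε := by
          apply max_le _ (by linarith)
          have := min_le_right b (s' + ε)
          linarith
        have h6 : 0 ≤ 2 * M * (‖v‖ + 1) := by positivity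
        rw [Real.coe_toNNReal _ h6]
        simp only [NNReal.coe_zero, sub_zero, NNReal.coe_add, coe_nnnorm, NNReal.coe_one]
        have h7 : 2 * M * (‖v‖ + 1) * ε ≤ ‖v‖ + 1 := by
          rw [hεdef]
          rw [mul_one_div, div_le_iff₀ (by linarith)]
          nlinarith [norm_nonneg v]
        exact calc 2 * M * (‖v‖ + 1) * max (min b (s' + ε) - s') (s' - s')
            ≤ 2 * M * (‖v‖ + 1) * ε := by nlinarith
          _ ≤ ‖v‖ + 1 := h7
    exact hpl.exists_eq_forall_mem_Icc_hasDerivWithinAt₀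
  -- chain `k+1` steps
  have claim : ∀ k : ℕ, ∃ δ : ℝ → E, δ s = v₀ ∧
      ∀ t ∈ Icc s (min b (s + (k + 1 : ℕ) * ε)),
        HasDerivWithinAt δ (K t (δ t)) (Icc s (min b (s + (k + 1 : ℕ) * ε))) t := by
    intro k
    induction k with
    | zero =>
      obtain ⟨δ, h0, h⟩ := onestep s ⟨le_rfl, hsb⟩ v₀
      exact ⟨δ, h0, by simpa using h⟩
    | succ k ih =>
      obtain ⟨δ₁, h10, h1⟩ := ih
      set m₁ : ℝ := min b (s + (k + 1 : ℕ) * ε) with hm₁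
      set m₂ : ℝ := min b (s + (k + 2 : ℕ) * ε) with hm₂
      have hsm₁ : s ≤ m₁ := le_min hsb (by push_cast; nlinarith)
      have hm₁b : m₁ ≤ b := min_le_left _ _
      have hm₁m₂ : m₁ ≤ m₂ := by
        apply le_min hm₁b
        calc m₁ ≤ s + (k + 1 : ℕ) * ε := min_le_right _ _
          _ ≤ s + (k + 2 : ℕ) * ε := by push_cast; nlinarith
      obtain ⟨δ₂, h20, h2⟩ := onestep m₁ ⟨hsm₁, hm₁b⟩ (δ₁ m₁)
      have hm₂le : m₂ ≤ min b (m₁ + ε) := by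
        apply le_min (min_le_left _ _)
        rcases le_total b (s + (k + 1 : ℕ) * ε) with h | h
        · have : m₁ = b := min_eq_left h
          rw [this]
          exact le_trans (min_le_left _ _) (by linarith)
        · have : m₁ = s + (k + 1 : ℕ) * ε := min_eq_right h
          rw [this]
          calc m₂ ≤ s + (k + 2 : ℕ) * ε := min_le_right _ _
            _ = s + (k + 1 : ℕ) * ε + ε := by push_cast; ring
      have h2' : ∀ t ∈ Icc m₁ m₂, HasDerivWithinAt δ₂ (K t (δ₂ t)) (Icc m₁ m₂) t := by
        intro t ht
        have htm : t ∈ Icc m₁ (min b (m₁ + ε)) := ⟨ht.1, ht.2.trans hm₂le⟩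
        exact (h2 t htm).mono (Icc_subset_Icc le_rfl hm₂le)
      obtain ⟨δ, he1, _, hsol⟩ :=
        ode_glue (fun t x => K t x) s m₁ m₂ hsm₁ hm₁m₂ δ₁ δ₂ h20.symm h1 h2'
      refine ⟨δ, ?_, ?_⟩
      · rw [he1 s ⟨le_rfl, hsm₁⟩]; exact h10
      · exact hsol
  -- choose k large enough
  obtain ⟨k, hk⟩ := exists_nat_ge ((b - s) / ε)
  obtain ⟨δ, h0, h⟩ := claim k
  have hbig : b ≤ s + (k + 1 : ℕ) * ε := by
    rw [div_le_iff₀ hε] at hk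
    push_cast
    nlinarith
  have : min b (s + (k + 1 : ℕ) * ε) = b := min_eq_left hbig
  rw [this] at h
  exact ⟨δ, h0, h⟩

lemma ode_backward (K : ℝ → (E →L[ℝ] E)) (hK : Continuous K) (a s : ℝ) (has : a ≤ s) (v₀ : E) :
    ∃ δ : ℝ → E, δ s = v₀ ∧ ∀ t ∈ Icc a s, HasDerivWithinAt δ (K t (δ t)) (Icc a s) t := by
  obtain ⟨μ, hμ0, hμ⟩ := ode_forward (fun t => -(K (2 * s - t)))
    (by continuity) s (2 * s - a) (by linarith) v₀
  refine ⟨fun t => μ (2 * s - t), by show μ (2 * s - s) = v₀; rw [show 2 * s - s = s by ring]; exact hμ0, ?_⟩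
  intro t ht
  have hmem : 2 * s - t ∈ Icc s (2 * s - a) := ⟨by linarith [ht.2], by linarith [ht.1]⟩
  have hmaps : MapsTo (fun t : ℝ => 2 * s - t) (Icc a s) (Icc s (2 * s - a)) := by
    intro y hy
    exact ⟨by simp; linarith [hy.2], by simp; linarith [hy.1]⟩
  have hh : HasDerivWithinAt (fun t : ℝ => 2 * s - t) (-1) (Icc a s) t :=
    ((hasDerivAt_id t).const_sub (2 * s)).hasDerivWithinAt
  have := (hμ (2 * s - t) hmem).scomp (x := t) hh hmaps
  have h2 : (2 * s - (2 * s - t)) = t := by ring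
  rw [h2] at this
  simpa [Function.comp_def] using this

lemma ode_global (K : ℝ → (E →L[ℝ] E)) (hK : Continuous K) (a b s : ℝ)
    (hs : s ∈ Icc a b) (v₀ : E) :
    ∃ δ : ℝ → E, δ s = v₀ ∧ ∀ t ∈ Icc a b, HasDerivWithinAt δ (K t (δ t)) (Icc a b) t := by
  obtain ⟨δ₁, h10, h1⟩ := ode_backward K hK a s hs.1 v₀
  obtain ⟨δ₂, h20, h2⟩ := ode_forward K hK s b hs.2 v₀
  obtain ⟨δ, he1, _, hsol⟩ :=
    ode_glue (fun t x => K t x) a s b hs.1 hs.2 δ₁ δ₂ (by rw [h10, h20]) h1 h2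
  exact ⟨δ, by rw [he1 s ⟨hs.1, le_rfl⟩]; exact h10, hsol⟩

end ODEAux

lemma clm_eq_sum {n : ℕ} (ℓ : (Fin n → ℝ) →L[ℝ] ℝ) (v : Fin n → ℝ) :
    ℓ v = ∑ j, v j * ℓ (Pi.single j 1) := by
  have hv : v = ∑ j, v j • (Pi.single j 1 : Fin n → ℝ) := by
    funext r
    simp [Finset.sum_apply, Pi.single_apply]
  conv_lhs => rw [hv]
  rw [map_sum]
  simp [smul_eq_mul]

lemma partial_fderiv {n : ℕ} (f : (Fin n → ℝ) → ℝ → (Fin n → ℝ))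
    (hf : ContDiff ℝ 1 (fun p : (Fin n → ℝ) × ℝ => f p.1 p.2))
    (z : Fin n → ℝ) (t : ℝ) (w : Fin n → ℝ) :
    fderiv ℝ (fun y => f y t) z w
      = fderiv ℝ (fun p : (Fin n → ℝ) × ℝ => f p.1 p.2) (z, t) (w, 0) := by
  have hF := (hf.differentiable one_ne_zero) (z, t)
  have h1 : HasFDerivAt (fun y : Fin n → ℝ => (y, t))
      ((ContinuousLinearMap.id ℝ (Fin n → ℝ)).prod 0) z :=
    (hasFDerivAt_id z).prodMk (hasFDerivAt_const t z)
  have hcomp : HasFDerivAt (fun y => f y t)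
      ((fderiv ℝ (fun p : (Fin n → ℝ) × ℝ => f p.1 p.2) (z, t)).comp
        ((ContinuousLinearMap.id ℝ (Fin n → ℝ)).prod 0)) z :=
    HasFDerivAt.comp (g := fun p : (Fin n → ℝ) × ℝ => f p.1 p.2) z hF.hasFDerivAt h1
  rw [hcomp.fderiv]
  simp




open scoped Matrix BigOperators

/-- the adjoint variable equals the gradient of L(x(T)) w.r.t. x(t). -/
theorem stmt1 {n : ℕ} (T : ℝ) (hT : 0 ≤ T)
    (f : (Fin n → ℝ) → ℝ → (Fin n → ℝ))
    (hf : ContDiff ℝ 1 (fun p : (Fin n → ℝ) × ℝ => f p.1 p.2))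
    (x lam : ℝ → (Fin n → ℝ))
    (J : ℝ → Matrix (Fin n) (Fin n) ℝ)
    (hJ : ∀ t, J t = fun i j => fderiv ℝ (fun y => f y t) (x t) (Pi.single j 1) i)
    (hx : ∀ t ∈ Set.Icc (0:ℝ) T, HasDerivAt x (f (x t) t) t)
    (L : (Fin n → ℝ) → ℝ) (hL : Differentiable ℝ L)
    (hlam : ∀ t ∈ Set.Icc (0:ℝ) T, HasDerivAt lam (-((J t)ᵀ.mulVec (lam t))) t)
    (hlamT : lam T = fun i => fderiv ℝ L (x T) (Pi.single i 1))
    -- Φ t is the flow map taking the state at time t to the state at time T: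
    (Φ : ℝ → (Fin n → ℝ) → (Fin n → ℝ))
    (hΦx : ∀ t ∈ Set.Icc (0:ℝ) T, Φ t (x t) = x T)
    (hΦdiff : ∀ t ∈ Set.Icc (0:ℝ) T, DifferentiableAt ℝ (Φ t) (x t))
    -- the derivative of the flow map is given by the variational equation:
    (hΦvar : ∀ t₀ ∈ Set.Icc (0:ℝ) T, ∀ δ : ℝ → (Fin n → ℝ),
      (∀ t ∈ Set.Icc (0:ℝ) T, HasDerivAt δ ((J t).mulVec (δ t)) t) →
      fderiv ℝ (Φ t₀) (x t₀) (δ t₀) = δ T) :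
    ∀ t ∈ Set.Icc (0:ℝ) T,
      lam t = fun i => fderiv ℝ (fun y => L (Φ t y)) (x t) (Pi.single i 1) := by
  intro t₀ ht₀
  -- continuity of the (clamped) coefficient matrix
  set F : (Fin n → ℝ) × ℝ → (Fin n → ℝ) := fun p => f p.1 p.2 with hF
  have hDc : Continuous (fderiv ℝ F) := hf.continuous_fderiv one_ne_zero
  have hJ' : ∀ t, J t = fun i j => fderiv ℝ F (x t, t) ((Pi.single j 1 : Fin n → ℝ), (0:ℝ)) i := by
    intro t
    rw [hJ t]
    funext i j
    rw [partial_fderiv f hf]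
  set proj : ℝ → ℝ := fun t => max 0 (min T t) with hprojdef
  have hprojc : Continuous proj := continuous_const.max (continuous_const.min continuous_id)
  have hprojmem : ∀ t, proj t ∈ Set.Icc (0:ℝ) T := fun t =>
    ⟨le_max_left _ _, max_le hT (min_le_left _ _)⟩
  have hprojeq : ∀ t ∈ Set.Icc (0:ℝ) T, proj t = t := by
    intro t ht
    simp only [hprojdef]
    rw [min_eq_right ht.2, max_eq_right ht.1]
  have hxc : Continuous fun t => x (proj t) := by
    rw [continuous_iff_continuousAt]
    intro t
    exact ((hx (proj t) (hprojmem t)).continuousAt).comp hprojc.continuousAt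
  set Km : ℝ → Matrix (Fin n) (Fin n) ℝ := fun t => J (proj t) with hKm
  have hKmc : Continuous Km := by
    apply continuous_matrix
    intro i j
    have heq : (fun t => Km t i j)
        = fun t => fderiv ℝ F (x (proj t), proj t) ((Pi.single j 1 : Fin n → ℝ), (0:ℝ)) i := by
      funext t
      show J (proj t) i j = _
      rw [hJ' (proj t)]
    rw [heq]
    exact (continuous_apply i).comp
      ((ContinuousLinearMap.apply ℝ (Fin n → ℝ)
        (((Pi.single j 1 : Fin n → ℝ), (0:ℝ)) : (Fin n → ℝ) × ℝ)).continuous.comp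
        (hDc.comp (hxc.prodMk (hprojc.comp continuous_id))))
  set Ψ : Matrix (Fin n) (Fin n) ℝ →ₗ[ℝ] ((Fin n → ℝ) →L[ℝ] (Fin n → ℝ)) :=
    { toFun := fun A => LinearMap.toContinuousLinearMap A.mulVecLin
      map_add' := fun A B => by
        ext v
        simp [Matrix.add_mulVec]
      map_smul' := fun c A => by
        ext v
        simp [Matrix.smul_mulVec] } with hΨ
  set K : ℝ → ((Fin n → ℝ) →L[ℝ] (Fin n → ℝ)) := fun t => Ψ (Km t) with hKdef
  have hKc : Continuous K := Ψ.continuous_of_finiteDimensional.comp hKmc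
  have hKapp : ∀ t v, K t v = (Km t).mulVec v := by
    intro t v
    simp [hKdef, hΨ]
  funext i
  -- solve the variational equation with δ t₀ = eᵢ
  obtain ⟨δ, hδ0, hδw⟩ := ode_global K hKc (-1) (T+1) t₀
    ⟨by linarith [ht₀.1], by linarith [ht₀.2]⟩ (Pi.single i 1)
  have hδ : ∀ t ∈ Set.Icc (0:ℝ) T, HasDerivAt δ ((J t).mulVec (δ t)) t := by
    intro t ht
    have h1 : t ∈ Set.Icc (-1:ℝ) (T+1) := ⟨by linarith [ht.1], by linarith [ht.2]⟩
    have h2 := (hδw t h1).hasDerivAt (Icc_mem_nhds (by linarith [ht.1]) (by linarith [ht.2]))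
    have h3 : K t (δ t) = (J t).mulVec (δ t) := by
      rw [hKapp]
      show (J (proj t)).mulVec (δ t) = _
      rw [hprojeq t ht]
    rwa [h3] at h2
  have hvar := hΦvar t₀ ht₀ δ hδ
  rw [hδ0] at hvar
  -- the conserved pairing
  set g : ℝ → ℝ := fun s => ∑ j, lam s j * δ s j with hg
  have hg0 : ∀ s ∈ Set.Icc (0:ℝ) T, HasDerivAt g 0 s := by
    intro s hs
    have h1 := hlam s hs
    have h2 := hδ s hs
    have h3 : HasDerivAt g
        (∑ j, ((-((J s)ᵀ.mulVec (lam s))) j * δ s j + lam s j * ((J s).mulVec (δ s)) j)) s :=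
      HasDerivAt.fun_sum fun j _ => (hasDerivAt_pi.1 h1 j).fun_mul (hasDerivAt_pi.1 h2 j)
    convert h3 using 1
    have key : (J s)ᵀ.mulVec (lam s) ⬝ᵥ δ s = lam s ⬝ᵥ (J s).mulVec (δ s) := by
      rw [Matrix.mulVec_transpose, ← Matrix.dotProduct_mulVec]
    simp only [dotProduct] at key
    simp only [Pi.neg_apply, neg_mul]
    rw [Finset.sum_add_distrib, Finset.sum_neg_distrib, key]
    ring
  have hgc : g T = g t₀ :=
    constant_of_has_deriv_right_zero (f := g) (a := t₀) (b := T)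
      (fun s hs => ((hg0 s ⟨ht₀.1.trans hs.1, hs.2⟩).continuousAt).continuousWithinAt)
      (fun s hs => (hg0 s ⟨ht₀.1.trans hs.1, hs.2.le⟩).hasDerivWithinAt)
      T ⟨ht₀.2, le_rfl⟩
  have hgT : g T = fderiv ℝ L (x T) (δ T) := by
    rw [clm_eq_sum (fderiv ℝ L (x T)) (δ T)]
    show (∑ j, lam T j * δ T j) = _
    rw [hlamT]
    exact Finset.sum_congr rfl fun j _ => mul_comm _ _
  have hgt₀ : g t₀ = lam t₀ i := by
    show (∑ j, lam t₀ j * δ t₀ j) = _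
    rw [hδ0]
    simp [Pi.single_apply]
  have hchain : fderiv ℝ (fun y => L (Φ t₀ y)) (x t₀)
      = (fderiv ℝ L (x T)).comp (fderiv ℝ (Φ t₀) (x t₀)) := by
    have h1 := fderiv_comp (𝕜 := ℝ) (x t₀) (hL.differentiableAt) (hΦdiff t₀ ht₀)
    rw [hΦx t₀ ht₀] at h1
    exact h1
  calc lam t₀ i = g t₀ := hgt₀.symm
    _ = g T := hgc.symm
    _ = fderiv ℝ L (x T) (δ T) := hgT
    _ = fderiv ℝ L (x T) (fderiv ℝ (Φ t₀) (x t₀) (Pi.single i 1)) := by rw [hvar]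
    _ = fderiv ℝ (fun y => L (Φ t₀ y)) (x t₀) (Pi.single i 1) := by rw [hchain]; rfl
end

section
/- Let I₀ = {i : bᵢ = 0} and define b̃ᵢ = bᵢ for i ∉ I₀ and b̃ᵢ = h for i ∈ I₀. Consider one step of the generalized integrator: δ_{n+1} = δ_n + h Σᵢ bᵢ d_{n,i}, Δ_{n,i} = δ_n + h Σⱼ a_{i,j} d_{n,j}, λ_{n+1} = λ_n + h Σᵢ b̃ᵢ l_{n,i}, with Λ_{n,i} = λ_n + h Σⱼ b̃ⱼ(1 − a_{j,i}/bᵢ) l_{n,j} if i ∉ I₀ and Λ_{n,i} = −Σⱼ b̃ⱼ a_{j,i} l_{n,j} if i ∈ I₀. If S is bilinear and S(d_{n,i}, Λ_{n,i}) + S(Δ_{n,i}, l_{n,i}) = 0 for every stage i, then S(δ_{n+1}, λ_{n+1}) = S(δ_n, λ_n). -/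
open scoped BigOperators

/-- one step of the generalized (symplectic) adjoint integrator,
handling stages with bᵢ = 0, conserves a bilinear quantity S. -/
theorem stmt5 {V W : Type*} [AddCommGroup V] [Module ℝ V]
    [AddCommGroup W] [Module ℝ W]
    (S : V →ₗ[ℝ] W →ₗ[ℝ] ℝ) {s : ℕ} (h : ℝ)
    (a : Fin s → Fin s → ℝ) (b : Fin s → ℝ)
    (bt : Fin s → ℝ) (hbt : ∀ i, bt i = if b i = 0 then h else b i)
    (δn δn1 : V) (d Δ : Fin s → V)
    (lamn lamn1 : W) (l Λ : Fin s → W)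
    (hΔ : ∀ i, Δ i = δn + h • ∑ j, a i j • d j)
    (hδ1 : δn1 = δn + h • ∑ i, b i • d i)
    (hΛ : ∀ i, (b i ≠ 0 → Λ i = lamn + h • ∑ j, (bt j * (1 - a j i / b i)) • l j) ∧
               (b i = 0 → Λ i = -∑ j, (bt j * a j i) • l j))
    (hlam1 : lamn1 = lamn + h • ∑ i, bt i • l i)
    (hstage : ∀ i, S (d i) (Λ i) + S (Δ i) (l i) = 0) :
    S δn1 lamn1 = S δn lamn := by
  -- uniform per-stage identity
  have key : ∀ i, h * b i * S (d i) lamn + h * bt i * (S δn (l i))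
      + h^2 * ∑ j, (b i * bt j - bt j * a j i) * S (d i) (l j)
      + h^2 * ∑ j, bt i * a i j * S (d j) (l i) = 0 := by
    intro i
    have hst := hstage i
    rw [hΔ i] at hst
    obtain ⟨h1, h2⟩ := hΛ i
    by_cases hb : b i = 0
    · rw [h2 hb] at hst
      simp only [map_add, map_smul, map_sum, map_neg, LinearMap.add_apply,
        LinearMap.smul_apply, LinearMap.sum_apply, LinearMap.neg_apply,
        smul_eq_mul] at hst
      have hbti : bt i = h := by rw [hbt i, if_pos hb]
      rw [hb, hbti]
      have e1 : ∑ j, ((0:ℝ) * bt j - bt j * a j i) * S (d i) (l j)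
          = -∑ j, bt j * a j i * S (d i) (l j) := by
        rw [← Finset.sum_neg_distrib]
        exact Finset.sum_congr rfl fun j _ => by ring
      have e2 : ∑ j, h * a i j * S (d j) (l i)
          = h * ∑ j, a i j * S (d j) (l i) := by
        rw [Finset.mul_sum]; exact Finset.sum_congr rfl fun j _ => by ring
      rw [e1, e2]
      linear_combination h^2 * hst
    · rw [h1 hb] at hst
      simp only [map_add, map_smul, map_sum, LinearMap.add_apply,
        LinearMap.smul_apply, LinearMap.sum_apply, smul_eq_mul] at hst
      have hbti : bt i = b i := by rw [hbt i, if_neg hb]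
      rw [hbti]
      have e1 : ∑ j, (b i * bt j - bt j * a j i) * S (d i) (l j)
          = b i * ∑ j, (bt j * (1 - a j i / b i)) * S (d i) (l j) := by
        rw [Finset.mul_sum]
        refine Finset.sum_congr rfl fun j _ => ?_
        have hx : b i * (bt j * (1 - a j i / b i)) = b i * bt j - bt j * a j i := by
          field_simp
        linear_combination (- S (d i) (l j)) * hx
      have e2 : ∑ j, b i * a i j * S (d j) (l i)
          = b i * ∑ j, a i j * S (d j) (l i) := by
        rw [Finset.mul_sum]; exact Finset.sum_congr rfl fun j _ => by ring
      rw [e1, e2]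
      linear_combination (h * b i) * hst
  -- sum the key identities
  have total : ∑ i, (h * b i * S (d i) lamn + h * bt i * (S δn (l i))
      + h^2 * ∑ j, (b i * bt j - bt j * a j i) * S (d i) (l j)
      + h^2 * ∑ j, bt i * a i j * S (d j) (l i)) = 0 :=
    Finset.sum_eq_zero fun i _ => key i
  rw [Finset.sum_add_distrib, Finset.sum_add_distrib, Finset.sum_add_distrib] at total
  have swap : ∑ i, h^2 * ∑ j, bt i * a i j * S (d j) (l i)
      = ∑ i, h^2 * ∑ j, bt j * a j i * S (d i) (l j) := by
    simp only [Finset.mul_sum]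
    rw [Finset.sum_comm]
  rw [swap] at total
  have split : ∀ i : Fin s, h^2 * ∑ j, (b i * bt j - bt j * a j i) * S (d i) (l j)
      = h^2 * ∑ j, b i * bt j * S (d i) (l j)
        - h^2 * ∑ j, bt j * a j i * S (d i) (l j) := by
    intro i
    rw [← mul_sub, ← Finset.sum_sub_distrib]
    congr 1
    exact Finset.sum_congr rfl fun j _ => by ring
  simp only [split] at total
  rw [Finset.sum_sub_distrib] at total
  have main : ∑ i, h * b i * S (d i) lamn + ∑ i, h * bt i * (S δn (l i))
      + ∑ i, h ^ 2 * ∑ j, b i * bt j * S (d i) (l j) = 0 := by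
    linarith [total]
  -- expand the goal
  rw [hδ1, hlam1]
  simp only [map_add, map_smul, map_sum, LinearMap.add_apply,
    LinearMap.smul_apply, LinearMap.sum_apply, smul_eq_mul]
  have hA : h * ∑ x, b x * S (d x) lamn = ∑ i, h * b i * S (d i) lamn := by
    rw [Finset.mul_sum]; exact Finset.sum_congr rfl fun i _ => by ring
  have hB : h * ∑ x, bt x * (S δn (l x) + h * ∑ y, b y * S (d y) (l x))
      = ∑ i, h * bt i * S δn (l i) + ∑ i, h^2 * ∑ j, b i * bt j * S (d i) (l j) := by
    have step1 : h * ∑ x, bt x * (S δn (l x) + h * ∑ y, b y * S (d y) (l x))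
        = ∑ x, (h * bt x * S δn (l x) + ∑ y, h^2 * (b y * bt x * S (d y) (l x))) := by
      rw [Finset.mul_sum]
      refine Finset.sum_congr rfl fun x _ => ?_
      have e : h * (bt x * (S δn (l x) + h * ∑ y, b y * S (d y) (l x)))
          = h * bt x * S δn (l x) + h^2 * bt x * ∑ y, b y * S (d y) (l x) := by ring
      rw [e, Finset.mul_sum]
      congr 1
      exact Finset.sum_congr rfl fun y _ => by ring
    rw [step1, Finset.sum_add_distrib]
    congr 1
    rw [Finset.sum_comm]
    refine Finset.sum_congr rfl fun i _ => ?_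
    rw [Finset.mul_sum]
  rw [hA, hB]
  linarith [main]
end

section
/- Suppose an N-step discretization satisfies the stepwise conservation S(δ_{n+1}, λ_{n+1}) = S(δ_n, λ_n) with δ_n = ∂x_n/∂x₀ (a Jacobian matrix), S(δ, λ) = λᵀδ, δ₀ = I, and the final condition λ_N = (∂L(x_N)/∂x_N)ᵀ for a differentiable L : ℝⁿ → ℝ. Then for every n ∈ {0,…,N}, λ_nᵀ δ_n = ∂L(x_N)/∂x₀; in particular λ₀ = (∂L(x_N)/∂x₀)ᵀ, i.e., the discrete adjoint variable equals the exact gradient of the loss with respect to the initial condition. -/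
open scoped Matrix BigOperators

/-- stepwise conservation of λᵀδ with δ₀ = I and final condition
λ_N = ∇L(x_N) implies that λ_nᵀδ_n equals the exact gradient of L(x_N) w.r.t. x₀,
and in particular λ₀ is that gradient. -/
theorem stmt6 {d : ℕ} (N : ℕ)
    (x : ℕ → (Fin d → ℝ) → (Fin d → ℝ)) (x₀ : Fin d → ℝ)
    (δ : ℕ → Matrix (Fin d) (Fin d) ℝ) (lam : ℕ → Fin d → ℝ)
    (L : (Fin d → ℝ) → ℝ)
    (hxdiff : ∀ n, DifferentiableAt ℝ (x n) x₀)
    (hLdiff : DifferentiableAt ℝ L (x N x₀))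
    (hδ : ∀ n, ∀ v, (δ n).mulVec v = fderiv ℝ (x n) x₀ v)
    (hδ0 : δ 0 = 1)
    (hlamN : lam N = fun i => fderiv ℝ L (x N x₀) (Pi.single i 1))
    (hcons : ∀ n < N, Matrix.vecMul (lam (n + 1)) (δ (n + 1)) =
      Matrix.vecMul (lam n) (δ n)) :
    (∀ n ≤ N, Matrix.vecMul (lam n) (δ n) =
      fun i => fderiv ℝ (fun y => L (x N y)) x₀ (Pi.single i 1)) ∧
    lam 0 = fun i => fderiv ℝ (fun y => L (x N y)) x₀ (Pi.single i 1) := by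
  -- chain rule at step N
  have hchain : ∀ v, fderiv ℝ (fun y => L (x N y)) x₀ v
      = fderiv ℝ L (x N x₀) (fderiv ℝ (x N) x₀ v) := by
    intro v
    rw [show (fun y => L (x N y)) = L ∘ x N from rfl,
      fderiv_comp x₀ hLdiff (hxdiff N)]
    rfl
  have hN : Matrix.vecMul (lam N) (δ N) =
      fun i => fderiv ℝ (fun y => L (x N y)) x₀ (Pi.single i 1) := by
    funext i
    rw [hchain, ← hδ N]
    have hlin := LinearMap.pi_apply_eq_sum_univ
      (fderiv ℝ L (x N x₀)).toLinearMap ((δ N).mulVec (Pi.single i 1))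
    simp only [ContinuousLinearMap.coe_coe] at hlin
    rw [hlin]
    simp only [Matrix.vecMul, dotProduct, hlamN]
    refine Finset.sum_congr rfl fun j _ => ?_
    have hv : (δ N).mulVec (Pi.single i 1) j = δ N j i := by
      simp [Matrix.mulVec, dotProduct, Pi.single_apply]
    rw [hv]
    have hsing : (fun k => if j = k then (1:ℝ) else 0) = Pi.single j (1:ℝ) := by
      funext k
      by_cases h : j = k <;> simp [Pi.single_apply, h, eq_comm]
    rw [hsing]
    simp [smul_eq_mul, mul_comm]
  -- downward induction
  have key : ∀ k, ∀ n, n + k = N → Matrix.vecMul (lam n) (δ n) =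
      fun i => fderiv ℝ (fun y => L (x N y)) x₀ (Pi.single i 1) := by
    intro k
    induction k with
    | zero =>
      intro n hn
      simp only [Nat.add_zero] at hn
      subst hn; exact hN
    | succ k ih =>
      intro n hn
      have hlt : n < N := by omega
      have := hcons n hlt
      rw [← this]
      exact ih (n+1) (by omega)
  have main : ∀ n ≤ N, Matrix.vecMul (lam n) (δ n) =
      fun i => fderiv ℝ (fun y => L (x N y)) x₀ (Pi.single i 1) := by
    intro n hn
    exact key (N - n) n (by omega)
  refine ⟨main, ?_⟩
  have h0 := main 0 (Nat.zero_le N)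
  rwa [hδ0, Matrix.vecMul_one] at h0
end

section
/- Under the hypotheses of the symplectic partitioned Runge–Kutta theorem (Bᵢ = bᵢ ≠ 0, bᵢA_{i,j} + Bⱼa_{j,i} − bᵢBⱼ = 0, Cᵢ = cᵢ), if the forward method in Eq. (4) and the adjoint method in Eq. (5) are applied to the variational system dδ/dt = J(t)δ and the adjoint system dλ/dt = −J(t)ᵀλ with exact stage Jacobians J evaluated at the forward stage points, then λ_nᵀ δ_n is independent of n: λ_Nᵀδ_N = λ_nᵀδ_n for all n = 0,…,N. -/
open scoped Matrix BigOperators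

lemma sum_dotProduct' {d s : ℕ} (f : Fin s → Fin d → ℝ) (w : Fin d → ℝ) :
    (∑ j, f j) ⬝ᵥ w = ∑ j, f j ⬝ᵥ w := by
  simp only [dotProduct, Finset.sum_apply, Finset.sum_mul]
  rw [Finset.sum_comm]

lemma dotProduct_sum' {d s : ℕ} (w : Fin d → ℝ) (f : Fin s → Fin d → ℝ) :
    w ⬝ᵥ (∑ j, f j) = ∑ j, w ⬝ᵥ f j := by
  simp only [dotProduct, Finset.sum_apply, Finset.mul_sum]
  rw [Finset.sum_comm]

/-- iterating the single-step conservation theorem: under the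
symplecticity conditions, the symplectic partitioned Runge–Kutta discretization of the
variational/adjoint pair with shared stage Jacobians conserves λ_nᵀδ_n over all steps. -/
theorem stmt11 {d s : ℕ} (N : ℕ) (h : ℕ → ℝ)
    (a A : Fin s → Fin s → ℝ) (b B : Fin s → ℝ)
    (hb : ∀ i, b i ≠ 0) (hBb : ∀ i, B i = b i)
    (hsymp : ∀ i j, b i * A i j + B j * a j i - b i * B j = 0)
    (J : ℕ → Fin s → Matrix (Fin d) (Fin d) ℝ)  -- shared stage Jacobians
    (δ lam : ℕ → Fin d → ℝ)
    (Δ Λ : ℕ → Fin s → Fin d → ℝ)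
    (hΔ : ∀ n < N, ∀ i, Δ n i = δ n + h n • ∑ j, a i j • (J n j).mulVec (Δ n j))
    (hδ : ∀ n < N, δ (n + 1) = δ n + h n • ∑ i, b i • (J n i).mulVec (Δ n i))
    (hΛ : ∀ n < N, ∀ i, Λ n i = lam n + h n • ∑ j, A i j • (-(J n j)ᵀ.mulVec (Λ n j)))
    (hlam : ∀ n < N, lam (n + 1) = lam n + h n • ∑ i, B i • (-(J n i)ᵀ.mulVec (Λ n i))) :
    ∀ n ≤ N, lam N ⬝ᵥ δ N = lam n ⬝ᵥ δ n := by
  have step : ∀ n < N, lam (n + 1) ⬝ᵥ δ (n + 1) = lam n ⬝ᵥ δ n := by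
    intro n hn
    set D : Fin s → Fin d → ℝ := fun i => (J n i).mulVec (Δ n i) with hD
    set L : Fin s → Fin d → ℝ := fun i => -(J n i)ᵀ.mulVec (Λ n i) with hL
    set f : Fin s → Fin s → ℝ := fun i j => L i ⬝ᵥ D j with hf
    set u : Fin s → ℝ := fun i => Λ n i ⬝ᵥ D i with hu
    have hkey : ∀ i, L i ⬝ᵥ Δ n i = -u i := by
      intro i
      simp only [hL, hu, hD, neg_dotProduct, neg_inj,
        Matrix.mulVec_transpose, ← Matrix.dotProduct_mulVec]
    have h1 : ∀ i, lam n ⬝ᵥ D i = u i - h n * ∑ j, A i j * f j i := by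
      intro i
      have e : lam n = Λ n i - h n • ∑ j, A i j • L j := by
        rw [hΛ n hn i]; abel
      rw [e, sub_dotProduct, smul_dotProduct, sum_dotProduct']
      simp [Finset.mul_sum, smul_dotProduct, hf]
      rfl
    have h2 : ∀ i, L i ⬝ᵥ δ n = -u i - h n * ∑ j, a i j * f i j := by
      intro i
      have e : δ n = Δ n i - h n • ∑ j, a i j • D j := by
        rw [hΔ n hn i]; abel
      rw [e, dotProduct_sub, hkey i, dotProduct_smul, dotProduct_sum']
      simp [Finset.mul_sum, dotProduct_smul, hf]
    have h3 : lam (n + 1) ⬝ᵥ δ (n + 1) = lam n ⬝ᵥ δ n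
        + h n * ∑ i, b i * (lam n ⬝ᵥ D i)
        + h n * ∑ i, b i * (L i ⬝ᵥ δ n)
        + h n * h n * ∑ i, ∑ j, b i * (b j * f i j) := by
      rw [hlam n hn, hδ n hn, add_dotProduct, dotProduct_add,
        dotProduct_add, dotProduct_smul, smul_dotProduct,
        smul_dotProduct, dotProduct_sum', sum_dotProduct', sum_dotProduct']
      simp only [smul_dotProduct, dotProduct_smul, smul_eq_mul,
        dotProduct_sum', Finset.mul_sum, hf, hBb]
      ring_nf
      rfl
    rw [h3]
    simp only [h1, h2]
    have eP : ∑ i, b i * (u i - h n * ∑ j, A i j * f j i)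
        = (∑ i, b i * u i) - h n * ∑ i, ∑ j, b i * (A i j * f j i) := by
      simp only [mul_sub, Finset.sum_sub_distrib, Finset.mul_sum]
      congr 1
      exact Finset.sum_congr rfl fun i _ => Finset.sum_congr rfl fun j _ => by ring
    have eQ : ∑ i, b i * (-u i - h n * ∑ j, a i j * f i j)
        = -(∑ i, b i * u i) - h n * ∑ i, ∑ j, b i * (a i j * f i j) := by
      simp only [mul_sub, mul_neg, Finset.sum_sub_distrib, Finset.sum_neg_distrib,
        Finset.mul_sum]
      congr 1
      exact Finset.sum_congr rfl fun i _ => Finset.sum_congr rfl fun j _ => by ring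
    have key2 : ∑ i, ∑ j, b i * (b j * f i j)
        = (∑ i, ∑ j, b i * (A i j * f j i)) + ∑ i, ∑ j, b i * (a i j * f i j) := by
      have hc : (∑ i, ∑ j, b i * (A i j * f j i)) = ∑ i, ∑ j, b j * (A j i * f i j) :=
        Finset.sum_comm
      rw [hc, ← Finset.sum_add_distrib]
      refine Finset.sum_congr rfl fun i _ => ?_
      rw [← Finset.sum_add_distrib]
      refine Finset.sum_congr rfl fun j _ => ?_
      have hs := hsymp j i
      rw [hBb i] at hs
      linear_combination (-(f i j)) * hs
    rw [eP, eQ]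
    linear_combination (h n * h n) * key2
  have base : ∀ k ≤ N, lam k ⬝ᵥ δ k = lam 0 ⬝ᵥ δ 0 := by
    intro k hk
    induction k with
    | zero => rfl
    | succ m ih => rw [step m (by omega), ih (by omega)]
  intro n hn
  rw [base N le_rfl, base n hn]
end
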